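/- With Δ the matrix Δ_{nk} = (−1)^{k−1}·binom(n−1,k−1) (for k ≤ n, zero otherwise) acting on ℂ^ℕ, the Cesàro operator satisfies C = Δ ∘ diag(1/n) ∘ Δ, where diag(1/n) is the diagonal operator (x_n) ↦ (x_n/n). Consequently, for each m ≥ 1, C(Δe_m) = (1/m)·Δe_m, where e_m is the m-th standard basis vector. -/

import Mathlib

open Finset

/-- The Cesàro operator on ℂ^ℕ (0-indexed). -/
noncomputable def cesaroOp (x : ℕ → ℂ) (n : ℕ) : ℂ :=
  (∑ i ∈ Finset.range (n + 1), x i) / (n + 1)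

/-- The operator Δ (0-indexed). -/
noncomputable def deltaOp (x : ℕ → ℂ) (n : ℕ) : ℂ :=
  ∑ k ∈ Finset.range (n + 1), (-1 : ℂ) ^ k * (n.choose k : ℂ) * x k

/-- The diagonal operator diag(1/n) (0-indexed: (x_n) ↦ (x_n/(n+1))). -/
noncomputable def diagOp (x : ℕ → ℂ) (n : ℕ) : ℂ := x n / ((n : ℂ) + 1)

lemma alt_sum_C (n : ℕ) :
    ∑ i ∈ range (n + 1), (-1 : ℂ) ^ i * (n.choose i : ℂ) = if n = 0 then 1 else 0 := by
  have h := Int.alternating_sum_range_choose (n := n)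
  have h2 : ((∑ i ∈ range (n + 1), (-1 : ℤ) ^ i * n.choose i : ℤ) : ℂ)
      = ((if n = 0 then 1 else 0 : ℤ) : ℂ) := by rw [h]
  push_cast at h2
  convert h2 using 2

lemma inv_lemma (m j : ℕ) :
    ∑ k ∈ range (m + 1), (-1 : ℂ) ^ k * (m.choose k : ℂ) * (k.choose j : ℂ)
      = if j = m then (-1) ^ m else 0 := by
  by_cases hj : j ≤ m
  · have hsplit : range (m + 1) = Finset.Ico 0 (m + 1) := by simp
    rw [hsplit, ← Finset.sum_Ico_consecutive _ (Nat.zero_le j) (by omega : j ≤ m + 1)]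
    have h1 : ∑ k ∈ Finset.Ico 0 j, (-1 : ℂ) ^ k * (m.choose k : ℂ) * (k.choose j : ℂ) = 0 := by
      apply Finset.sum_eq_zero
      intro k hk
      simp only [Finset.mem_Ico] at hk
      rw [Nat.choose_eq_zero_of_lt hk.2]
      simp
    rw [h1, zero_add, Finset.sum_Ico_eq_sum_range]
    have hm : m + 1 - j = (m - j) + 1 := by omega
    rw [hm]
    have h2 : ∀ i ∈ range ((m - j) + 1),
        (-1 : ℂ) ^ (j + i) * (m.choose (j + i) : ℂ) * ((j + i).choose j : ℂ)
          = ((-1 : ℂ) ^ j * (m.choose j : ℂ)) * ((-1 : ℂ) ^ i * ((m - j).choose i : ℂ)) := by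
      intro i hi
      simp only [Finset.mem_range] at hi
      have hc : m.choose (j + i) * (j + i).choose j = m.choose j * (m - j).choose i := by
        have := Nat.choose_mul (n := m) (k := j + i) (s := j) (by omega)
        simpa using this
      have hc' : (m.choose (j + i) : ℂ) * ((j + i).choose j : ℂ)
          = (m.choose j : ℂ) * ((m - j).choose i : ℂ) := by exact_mod_cast congrArg Nat.cast hc
      rw [pow_add]
      ring_nf
      ring_nf at hc'
      rw [mul_assoc, hc']
      ring
    rw [Finset.sum_congr rfl h2, ← Finset.mul_sum, alt_sum_C]
    by_cases hjm : j = m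
    · subst hjm; simp
    · rw [if_neg (by omega), if_neg hjm, mul_zero]
  · rw [if_neg (by omega)]
    apply Finset.sum_eq_zero
    intro k hk
    simp only [Finset.mem_range] at hk
    rw [Nat.choose_eq_zero_of_lt (show k < j by omega)]
    simp

lemma T_lemma : ∀ n : ℕ, ∀ j : ℕ, j ≤ n →
    ∑ k ∈ range (n + 1), (-1 : ℂ) ^ k * ((n + 1).choose (k + 1) : ℂ) * (k.choose j : ℂ)
      = (-1) ^ j := by
  intro n
  induction n with
  | zero => intro j hj; interval_cases j; simp
  | succ n ih =>
    intro j hj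
    rcases Nat.lt_or_ge j (n + 1) with hj' | hj'
    · have hj2 : j ≤ n := by omega
      have hsplit : ∀ k ∈ range (n + 2),
          (-1 : ℂ) ^ k * ((n + 2).choose (k + 1) : ℂ) * (k.choose j : ℂ)
            = (-1 : ℂ) ^ k * ((n + 1).choose k : ℂ) * (k.choose j : ℂ)
              + (-1 : ℂ) ^ k * ((n + 1).choose (k + 1) : ℂ) * (k.choose j : ℂ) := by
        intro k _
        have : (n + 2).choose (k + 1) = (n + 1).choose k + (n + 1).choose (k + 1) :=
          Nat.choose_succ_succ (n + 1) k
        rw [this]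
        push_cast
        ring
      rw [Finset.sum_congr rfl hsplit, Finset.sum_add_distrib]
      have hA := inv_lemma (n + 1) j
      rw [if_neg (by omega)] at hA
      rw [hA, zero_add, Finset.sum_range_succ, Nat.choose_succ_self]
      simp only [Nat.cast_zero, mul_zero, zero_mul, add_zero]
      exact ih j hj2
    · have hj2 : j = n + 1 := by omega
      subst hj2
      rw [Finset.sum_range_succ]
      have hz : ∑ k ∈ range (n + 1),
          (-1 : ℂ) ^ k * ((n + 2).choose (k + 1) : ℂ) * (k.choose (n + 1) : ℂ) = 0 := by
        apply Finset.sum_eq_zero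
        intro k hk
        simp only [Finset.mem_range] at hk
        rw [Nat.choose_eq_zero_of_lt (show k < n + 1 by omega)]
        simp
      rw [hz, zero_add, Nat.choose_self, Nat.choose_self]
      simp

lemma key_lemma (n j : ℕ) (hj : j ≤ n) :
    ∑ k ∈ range (n + 1), (-1 : ℂ) ^ k * (n.choose k : ℂ) * (k.choose j : ℂ) / ((k : ℂ) + 1)
      = (-1) ^ j / ((n : ℂ) + 1) := by
  have hstep : ∀ k ∈ range (n + 1),
      (-1 : ℂ) ^ k * (n.choose k : ℂ) * (k.choose j : ℂ) / ((k : ℂ) + 1)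
        = ((-1 : ℂ) ^ k * (((n + 1).choose (k + 1)) : ℂ) * (k.choose j : ℂ)) / ((n : ℂ) + 1) := by
    intro k _
    have h := Nat.add_one_mul_choose_eq n k
    have h' : ((n : ℂ) + 1) * (n.choose k : ℂ) = ((n + 1).choose (k + 1) : ℂ) * ((k : ℂ) + 1) := by
      exact_mod_cast congrArg (Nat.cast (R := ℂ)) h
    have hk1 : ((k : ℂ) + 1) ≠ 0 := Nat.cast_add_one_ne_zero k
    have hn1 : ((n : ℂ) + 1) ≠ 0 := Nat.cast_add_one_ne_zero n
    rw [div_eq_div_iff hk1 hn1]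
    linear_combination ((-1 : ℂ) ^ k * (k.choose j : ℂ)) * h'
  rw [Finset.sum_congr rfl hstep, ← Finset.sum_div, T_lemma n j hj]

lemma extend_inner (x : ℕ → ℂ) {k n : ℕ} (hk : k ≤ n) :
    ∑ j ∈ range (k + 1), (-1 : ℂ) ^ j * (k.choose j : ℂ) * x j
      = ∑ j ∈ range (n + 1), (-1 : ℂ) ^ j * (k.choose j : ℂ) * x j := by
  apply Finset.sum_subset (Finset.range_subset_range.2 (by omega))
  intro j hj hj'
  simp only [Finset.mem_range] at hj hj'
  rw [Nat.choose_eq_zero_of_lt (show k < j by omega)]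
  simp

lemma delta_delta (x : ℕ → ℂ) : deltaOp (deltaOp x) = x := by
  funext n
  unfold deltaOp
  have h1 : ∀ k ∈ range (n + 1),
      (-1 : ℂ) ^ k * (n.choose k : ℂ) * ∑ j ∈ range (k + 1), (-1 : ℂ) ^ j * (k.choose j : ℂ) * x j
        = ∑ j ∈ range (n + 1),
            (-1 : ℂ) ^ k * (n.choose k : ℂ) * (k.choose j : ℂ) * ((-1 : ℂ) ^ j * x j) := by
    intro k hk
    simp only [Finset.mem_range] at hk
    rw [extend_inner x (show k ≤ n by omega), Finset.mul_sum]
    exact Finset.sum_congr rfl fun j _ => by ring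
  rw [Finset.sum_congr rfl h1, Finset.sum_comm]
  have h2 : ∀ j ∈ range (n + 1),
      ∑ k ∈ range (n + 1),
          (-1 : ℂ) ^ k * (n.choose k : ℂ) * (k.choose j : ℂ) * ((-1 : ℂ) ^ j * x j)
        = (if j = n then (-1 : ℂ) ^ n else 0) * ((-1 : ℂ) ^ j * x j) := by
    intro j _
    rw [← Finset.sum_mul, inv_lemma n j]
  rw [Finset.sum_congr rfl h2]
  simp only [ite_mul, zero_mul]
  rw [Finset.sum_ite_eq' (range (n + 1)) n]
  simp only [Finset.mem_range, lt_add_iff_pos_right, zero_lt_one, if_true]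
  have : ((-1 : ℂ) ^ n) * ((-1 : ℂ) ^ n) = 1 := by
    rw [← pow_add, ← two_mul, pow_mul]; norm_num
  linear_combination x n * this

lemma main_identity (x : ℕ → ℂ) : cesaroOp x = deltaOp (diagOp (deltaOp x)) := by
  funext n
  unfold cesaroOp deltaOp diagOp
  have h1 : ∀ k ∈ range (n + 1),
      (-1 : ℂ) ^ k * (n.choose k : ℂ)
          * ((∑ j ∈ range (k + 1), (-1 : ℂ) ^ j * (k.choose j : ℂ) * x j) / ((k : ℂ) + 1))
        = ∑ j ∈ range (n + 1),
            (-1 : ℂ) ^ k * (n.choose k : ℂ) * (k.choose j : ℂ) / ((k : ℂ) + 1)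
              * ((-1 : ℂ) ^ j * x j) := by
    intro k hk
    simp only [Finset.mem_range] at hk
    rw [extend_inner x (show k ≤ n by omega), Finset.sum_div, Finset.mul_sum]
    exact Finset.sum_congr rfl fun j _ => by ring
  rw [Finset.sum_congr rfl h1, Finset.sum_comm]
  have h2 : ∀ j ∈ range (n + 1),
      ∑ k ∈ range (n + 1),
          (-1 : ℂ) ^ k * (n.choose k : ℂ) * (k.choose j : ℂ) / ((k : ℂ) + 1)
            * ((-1 : ℂ) ^ j * x j)
        = x j / ((n : ℂ) + 1) := by
    intro j hj
    simp only [Finset.mem_range] at hj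
    rw [← Finset.sum_mul, key_lemma n j (by omega)]
    have hsq : ((-1 : ℂ) ^ j) * ((-1 : ℂ) ^ j) = 1 := by
      rw [← pow_add, ← two_mul, pow_mul]; norm_num
    have hn1 : ((n : ℂ) + 1) ≠ 0 := Nat.cast_add_one_ne_zero n
    field_simp
    linear_combination x j * hsq
  rw [Finset.sum_congr rfl h2, ← Finset.sum_div]

lemma delta_smul (c : ℂ) (x : ℕ → ℂ) : deltaOp (c • x) = c • deltaOp x := by
  funext n
  simp only [deltaOp, Pi.smul_apply, smul_eq_mul, Finset.mul_sum]
  exact Finset.sum_congr rfl fun k _ => by ring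

lemma diag_single (m : ℕ) :
    diagOp (Pi.single m 1) = (1 / ((m : ℂ) + 1)) • (Pi.single m 1 : ℕ → ℂ) := by
  funext n
  by_cases h : n = m
  · subst h
    simp [diagOp, div_eq_mul_inv, mul_comm]
  · simp [diagOp, Pi.single_eq_of_ne h]

/-- C = Δ ∘ diag(1/n) ∘ Δ, and hence C(Δe_m) = (1/m)·Δe_m. -/
theorem stmt6 :
    (∀ x : ℕ → ℂ, cesaroOp x = deltaOp (diagOp (deltaOp x))) ∧
      (∀ m : ℕ, cesaroOp (deltaOp (Pi.single m 1)) =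
        (1 / ((m : ℂ) + 1)) • deltaOp (Pi.single m 1)) := by
  refine ⟨main_identity, fun m => ?_⟩
  rw [main_identity, delta_delta, diag_single, delta_smul]
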